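/- Let (Z₁, Z₂) be bivariate normal with standard normal margins and correlation ρ ∈ [0,1), and (Z₁*, Z₂*) bivariate normal with standard normal margins and correlation ρ* ∈ [0,1). If ρ* ≤ ρ and 0 ≤ b₂ ≤ b₁, then P(Z₁* > b₁ and Z₂* > b₂) ≤ P(Z₁ > b₁ and Z₂ > b₂). -/

import Mathlib

open MeasureTheory ProbabilityTheory

/-- `(Z₁, Z₂)` is bivariate normal with standard normal margins and correlation `ρ`:
every linear combination `a Z₁ + b Z₂` is Gaussian with mean `0` and
variance `a² + 2abρ + b²`. -/
def IsStdBivNormal {Ω : Type*} [MeasurableSpace Ω] (P : Measure Ω)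
    (Z₁ Z₂ : Ω → ℝ) (ρ : ℝ) : Prop :=
  ∀ a b : ℝ, P.map (fun ω => a * Z₁ ω + b * Z₂ ω) =
    gaussianReal 0 (a ^ 2 + 2 * a * b * ρ + b ^ 2).toNNReal

open scoped NNReal ENNReal Real Topology
open Complex Set Filter

noncomputable section CramerWoldAux

/-- Characteristic function of a centered real Gaussian at frequency 1. -/
lemma charGauss (v : ℝ≥0) :
    ∫ x : ℝ, Complex.exp ((x : ℂ) * Complex.I) ∂(gaussianReal 0 v) =
      Complex.exp (((-(v : ℝ) / 2 : ℝ) : ℂ)) := by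
  rcases eq_or_ne v 0 with hv | hv
  · subst hv
    simp [gaussianReal_zero_var, integral_dirac]
  · have hpos : (0:ℝ) < (v:ℝ) := by positivity
    have h2πv : (0:ℝ) < 2 * π * (v:ℝ) := by positivity
    rw [gaussianReal_of_var_ne_zero _ hv]
    have hd : gaussianPDF 0 v = fun x => ((gaussianPDFReal 0 v x).toNNReal : ℝ≥0∞) := rfl
    have hmeas : Measurable fun x => (gaussianPDFReal 0 v x).toNNReal :=
      (measurable_gaussianPDFReal 0 v).real_toNNReal
    rw [hd, integral_withDensity_eq_integral_smul hmeas]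
    have hb : (0:ℝ) < 1 / (2 * (v:ℝ)) := by positivity
    have key := fourierIntegral_gaussian
      (b := ((1 / (2 * (v:ℝ)) : ℝ) : ℂ)) (by simpa using hb) (1 : ℂ)
    have hint : ∀ x : ℝ, (gaussianPDFReal 0 v x).toNNReal • Complex.exp ((x:ℂ) * Complex.I)
        = ((Real.sqrt (2 * π * (v:ℝ)))⁻¹ : ℂ) *
          (Complex.exp (Complex.I * 1 * (x:ℂ)) *
            Complex.exp (-((1 / (2 * (v:ℝ)) : ℝ) : ℂ) * (x:ℂ) ^ 2)) := by
      intro x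
      rw [NNReal.smul_def, Real.coe_toNNReal _ (gaussianPDFReal_nonneg 0 v x)]
      rw [gaussianPDFReal]
      rw [Complex.real_smul]
      push_cast
      rw [mul_assoc, ← Complex.exp_add, ← Complex.exp_add]
      congr 1
      ring
    simp_rw [hint]
    rw [integral_const_mul, key]
    have hv' : ((v:ℝ) : ℂ) ≠ 0 := by
      simpa using ne_of_gt hpos
    have h1 : (-(1:ℂ) ^ 2 / (4 * ((1 / (2 * (v:ℝ)) : ℝ) : ℂ))) = ((-(v:ℝ) / 2 : ℝ) : ℂ) := by
      push_cast
      field_simp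
      ring
    have h2 : ((π : ℂ) / ((1 / (2 * (v:ℝ)) : ℝ) : ℂ)) = (((2 * π * (v:ℝ) : ℝ)) : ℂ) := by
      push_cast
      field_simp
    rw [h1, h2]
    have h3 : (((2 * π * (v:ℝ) : ℝ)) : ℂ) ^ (1 / 2 : ℂ)
        = ((Real.sqrt (2 * π * (v:ℝ)) : ℝ) : ℂ) := by
      rw [show (1 / 2 : ℂ) = ((1 / 2 : ℝ) : ℂ) by norm_num]
      rw [← Complex.ofReal_cpow (le_of_lt h2πv), Real.sqrt_eq_rpow]
    rw [h3, ← mul_assoc, ← Complex.ofReal_inv, ← Complex.ofReal_mul,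
      inv_mul_cancel₀ (ne_of_gt (Real.sqrt_pos.mpr h2πv))]
    simp


/-- A random variable with a Gaussian pushforward is a.e. measurable. -/
lemma aemeasurable_of_map_gauss {Ω : Type*} [MeasurableSpace Ω] {Q : Measure Ω} {f : Ω → ℝ}
    {m : ℝ} {v : ℝ≥0} (h : Q.map f = gaussianReal m v) : AEMeasurable f Q := by
  by_contra hc
  rw [Measure.map_of_not_aemeasurable hc] at h
  exact (IsProbabilityMeasure.ne_zero (gaussianReal m v)) h.symm

lemma charGaussLin {Ω : Type*} [MeasurableSpace Ω] {Q : Measure Ω} {f : Ω → ℝ}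
    (hf : AEMeasurable f Q) {v : ℝ≥0} (h : Q.map f = gaussianReal 0 v) :
    ∫ ω, Complex.exp ((f ω : ℂ) * Complex.I) ∂Q = Complex.exp (((-(v : ℝ) / 2 : ℝ) : ℂ)) := by
  have hmeas : AEStronglyMeasurable (fun x : ℝ => Complex.exp ((x : ℂ) * Complex.I)) (Q.map f) :=
    (Complex.continuous_exp.comp (Complex.continuous_ofReal.mul continuous_const)).aestronglyMeasurable
  have := integral_map (φ := f) (μ := Q) hf hmeas
  rw [← this, h, charGauss]

lemma integrable_bdd {Ω : Type*} [MeasurableSpace Ω] {Q : Measure Ω} [IsProbabilityMeasure Q]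
    {f : Ω → ℂ} (hf : AEStronglyMeasurable f Q) {C : ℝ} (hC : ∀ ω, ‖f ω‖ ≤ C) :
    Integrable f Q :=
  ⟨hf, HasFiniteIntegral.of_bounded (C := C) (ae_of_all _ hC)⟩

section SpanExt

variable {Ω : Type*} [MeasurableSpace Ω] {Ω' : Type*} [MeasurableSpace Ω']

/-- Continuity of `G ↦ ∫ G (φ ω) * ψ ω ∂Q` in the sup norm. -/
lemma cont_int {Q : Measure Ω} [IsProbabilityMeasure Q] {T : ℝ} [hT : Fact (0 < T)]
    (φ : Ω → AddCircle T) (ψ : Ω → ℂ) (hφ : Measurable φ) (hψm : AEStronglyMeasurable ψ Q)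
    (C : ℝ) (hψ : ∀ ω, ‖ψ ω‖ ≤ C) :
    Continuous fun G : C(AddCircle T, ℂ) => ∫ ω, G (φ ω) * ψ ω ∂Q := by
  have hC0 : (0:ℝ) ≤ max C 0 := le_max_right _ _
  have hint : ∀ G : C(AddCircle T, ℂ), Integrable (fun ω => G (φ ω) * ψ ω) Q := by
    intro G
    refine integrable_bdd ((((map_continuous G).measurable.comp hφ)).aestronglyMeasurable.mul hψm)
      (C := ‖G‖ * max C 0) fun ω => ?_
    rw [norm_mul]
    exact mul_le_mul (ContinuousMap.norm_coe_le_norm G _)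
      (le_trans (hψ ω) (le_max_left _ _)) (norm_nonneg _) (norm_nonneg _)
  have : LipschitzWith (Real.toNNReal (max C 0))
      (fun G : C(AddCircle T, ℂ) => ∫ ω, G (φ ω) * ψ ω ∂Q) := by
    refine lipschitzWith_iff_dist_le_mul.mpr fun G₁ G₂ => ?_
    rw [dist_eq_norm, ← integral_sub (hint G₁) (hint G₂)]
    have hbd : ∀ ω, ‖G₁ (φ ω) * ψ ω - G₂ (φ ω) * ψ ω‖ ≤ dist G₁ G₂ * max C 0 := by
      intro ω
      rw [← sub_mul, norm_mul]
      refine mul_le_mul ?_ (le_trans (hψ ω) (le_max_left _ _)) (norm_nonneg _) dist_nonneg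
      rw [← ContinuousMap.sub_apply, show ‖(G₁ - G₂) (φ ω)‖ = dist (G₁ (φ ω)) (G₂ (φ ω)) by
        rw [dist_eq_norm, ContinuousMap.sub_apply]]
      exact ContinuousMap.dist_apply_le_dist _
    calc ‖∫ ω, (G₁ (φ ω) * ψ ω - G₂ (φ ω) * ψ ω) ∂Q‖
        ≤ dist G₁ G₂ * max C 0 := by
          refine le_trans (norm_integral_le_of_norm_le_const (C := dist G₁ G₂ * max C 0)
            (ae_of_all _ hbd)) ?_
          simp
      _ = Real.toNNReal (max C 0) * dist G₁ G₂ := by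
          rw [Real.coe_toNNReal _ hC0]; ring
  exact this.continuous

/-- If two "product against bounded" integrals agree on all Fourier monomials, they agree on
all continuous functions on the circle. -/
lemma span_ext {T : ℝ} [hT : Fact (0 < T)]
    {Q : Measure Ω} [IsProbabilityMeasure Q] {Q' : Measure Ω'} [IsProbabilityMeasure Q']
    (φ : Ω → AddCircle T) (ψ : Ω → ℂ) (φ' : Ω' → AddCircle T) (ψ' : Ω' → ℂ)
    (hφ : Measurable φ) (hψm : AEStronglyMeasurable ψ Q)
    (hφ' : Measurable φ') (hψm' : AEStronglyMeasurable ψ' Q')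
    (C : ℝ) (hψ : ∀ ω, ‖ψ ω‖ ≤ C) (hψ' : ∀ ω, ‖ψ' ω‖ ≤ C)
    (h : ∀ n : ℤ, ∫ ω, fourier n (φ ω) * ψ ω ∂Q = ∫ ω, fourier n (φ' ω) * ψ' ω ∂Q')
    (G : C(AddCircle T, ℂ)) :
    ∫ ω, G (φ ω) * ψ ω ∂Q = ∫ ω, G (φ' ω) * ψ' ω ∂Q' := by
  have hint : ∀ (G : C(AddCircle T, ℂ)), Integrable (fun ω => G (φ ω) * ψ ω) Q := by
    intro G
    refine integrable_bdd ((((map_continuous G).measurable.comp hφ)).aestronglyMeasurable.mul hψm)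
      (C := ‖G‖ * max C 0) fun ω => ?_
    rw [norm_mul]
    exact mul_le_mul (ContinuousMap.norm_coe_le_norm G _)
      (le_trans (hψ ω) (le_max_left _ _)) (norm_nonneg _) (norm_nonneg _)
  have hint' : ∀ (G : C(AddCircle T, ℂ)), Integrable (fun ω => G (φ' ω) * ψ' ω) Q' := by
    intro G
    refine integrable_bdd ((((map_continuous G).measurable.comp hφ')).aestronglyMeasurable.mul hψm')
      (C := ‖G‖ * max C 0) fun ω => ?_
    rw [norm_mul]
    exact mul_le_mul (ContinuousMap.norm_coe_le_norm G _)
      (le_trans (hψ' ω) (le_max_left _ _)) (norm_nonneg _) (norm_nonneg _)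
  have hdense : Dense (↑(Submodule.span ℂ (Set.range (@fourier T))) : Set C(AddCircle T, ℂ)) := by
    rw [dense_iff_closure_eq, ← Submodule.topologicalClosure_coe, span_fourier_closure_eq_top]
    rfl
  have hfun : (fun G : C(AddCircle T, ℂ) => ∫ ω, G (φ ω) * ψ ω ∂Q)
      = fun G : C(AddCircle T, ℂ) => ∫ ω, G (φ' ω) * ψ' ω ∂Q' := by
    refine Continuous.ext_on hdense (cont_int φ ψ hφ hψm C hψ) (cont_int φ' ψ' hφ' hψm' C hψ')
      fun G hG => ?_
    induction hG using Submodule.span_induction with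
    | mem G hGmem =>
        obtain ⟨n, rfl⟩ := hGmem
        exact h n
    | zero => simp
    | add G₁ G₂ _ _ h₁ h₂ =>
        simp only [ContinuousMap.add_apply, add_mul]
        rw [integral_add (hint G₁) (hint G₂), integral_add (hint' G₁) (hint' G₂), h₁, h₂]
    | smul c G _ hc =>
        simp only [ContinuousMap.smul_apply, smul_mul_assoc]
        rw [integral_smul, integral_smul, hc]
  exact congrFun hfun G

end SpanExt


section StepCircle

variable {Ω : Type*} [MeasurableSpace Ω] {Ω' : Type*} [MeasurableSpace Ω']

lemma step_circle {Q : Measure Ω} [IsProbabilityMeasure Q] {Q' : Measure Ω'}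
    [IsProbabilityMeasure Q'] {X Y : Ω → ℝ} {X' Y' : Ω' → ℝ}
    (hX : Measurable X) (hY : Measurable Y) (hX' : Measurable X') (hY' : Measurable Y')
    (hchar : ∀ s t : ℝ, ∫ ω, Complex.exp (((s * X ω + t * Y ω : ℝ) : ℂ) * Complex.I) ∂Q
      = ∫ ω, Complex.exp (((s * X' ω + t * Y' ω : ℝ) : ℂ) * Complex.I) ∂Q')
    (T : ℝ) (hT : 0 < T) (G H : C(AddCircle T, ℂ)) :
    ∫ ω, G (X ω : AddCircle T) * H (Y ω : AddCircle T) ∂Q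
      = ∫ ω, G (X' ω : AddCircle T) * H (Y' ω : AddCircle T) ∂Q' := by
  haveI : Fact (0 < T) := ⟨hT⟩
  have hmono : ∀ (n m : ℤ) (x y : ℝ),
      fourier n (x : AddCircle T) * fourier m (y : AddCircle T)
        = Complex.exp ((((2*π*n/T) * x + (2*π*m/T) * y : ℝ) : ℂ) * Complex.I) := by
    intro n m x y
    rw [fourier_coe_apply, fourier_coe_apply, ← Complex.exp_add]
    congr 1
    push_cast
    field_simp
  have hkey : ∀ n m : ℤ,
      ∫ ω, fourier n (X ω : AddCircle T) * fourier m (Y ω : AddCircle T) ∂Q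
        = ∫ ω, fourier n (X' ω : AddCircle T) * fourier m (Y' ω : AddCircle T) ∂Q' := by
    intro n m
    simp_rw [hmono]
    exact hchar _ _
  have hmk : Measurable (fun x : ℝ => (x : AddCircle T)) := AddCircle.measurable_mk'
  have hfb : ∀ (k : ℤ) (u : AddCircle T), ‖fourier k u‖ ≤ 1 :=
    fun k u => le_of_eq (Circle.norm_coe _)
  have stage1 : ∀ (n : ℤ) (K : C(AddCircle T, ℂ)),
      ∫ ω, K (Y ω : AddCircle T) * fourier n (X ω : AddCircle T) ∂Q
        = ∫ ω, K (Y' ω : AddCircle T) * fourier n (X' ω : AddCircle T) ∂Q' := by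
    intro n K
    refine span_ext (fun ω => (Y ω : AddCircle T)) (fun ω => fourier n (X ω : AddCircle T)) _ _
      (hmk.comp hY)
      (((map_continuous (fourier n)).measurable.comp (hmk.comp hX)).aestronglyMeasurable)
      (hmk.comp hY')
      (((map_continuous (fourier n)).measurable.comp (hmk.comp hX')).aestronglyMeasurable)
      1 (fun ω => hfb n _) (fun ω => hfb n _) (fun m => ?_) K
    calc ∫ ω, fourier m (Y ω : AddCircle T) * fourier n (X ω : AddCircle T) ∂Q
        = ∫ ω, fourier n (X ω : AddCircle T) * fourier m (Y ω : AddCircle T) ∂Q := by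
          apply integral_congr_ae; filter_upwards with ω; ring
      _ = ∫ ω, fourier n (X' ω : AddCircle T) * fourier m (Y' ω : AddCircle T) ∂Q' := hkey n m
      _ = ∫ ω, fourier m (Y' ω : AddCircle T) * fourier n (X' ω : AddCircle T) ∂Q' := by
          apply integral_congr_ae; filter_upwards with ω; ring
  refine span_ext (fun ω => (X ω : AddCircle T)) (fun ω => H (Y ω : AddCircle T)) _ _
    (hmk.comp hX) (((map_continuous H).measurable.comp (hmk.comp hY)).aestronglyMeasurable)
    (hmk.comp hX') (((map_continuous H).measurable.comp (hmk.comp hY')).aestronglyMeasurable)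
    ‖H‖ (fun ω => ContinuousMap.norm_coe_le_norm H _)
    (fun ω => ContinuousMap.norm_coe_le_norm H _) (fun n => ?_) G
  calc ∫ ω, fourier n (X ω : AddCircle T) * H (Y ω : AddCircle T) ∂Q
      = ∫ ω, H (Y ω : AddCircle T) * fourier n (X ω : AddCircle T) ∂Q := by
        apply integral_congr_ae; filter_upwards with ω; ring
    _ = ∫ ω, H (Y' ω : AddCircle T) * fourier n (X' ω : AddCircle T) ∂Q' := stage1 n H
    _ = ∫ ω, fourier n (X' ω : AddCircle T) * H (Y' ω : AddCircle T) ∂Q' := by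
        apply integral_congr_ae; filter_upwards with ω; ring

lemma tail_to_zero {Q : Measure Ω} [IsProbabilityMeasure Q] {X : Ω → ℝ} (hX : Measurable X) :
    Filter.Tendsto (fun n : ℕ => (Q {ω | (n:ℝ) ≤ |X ω|}).toReal) Filter.atTop (𝓝 0) := by
  have hmeas : ∀ n : ℕ, MeasurableSet {ω | (n:ℝ) ≤ |X ω|} := fun n =>
    measurableSet_le measurable_const hX.abs
  have hanti : Antitone fun n : ℕ => {ω | (n:ℝ) ≤ |X ω|} := by
    intro n m hnm ω hω
    have : (n:ℝ) ≤ (m:ℝ) := by exact_mod_cast hnm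
    exact le_trans this hω
  have hempty : ⋂ n : ℕ, {ω | (n:ℝ) ≤ |X ω|} = (∅ : Set Ω) := by
    ext ω
    simp only [Set.mem_iInter, Set.mem_setOf_eq, Set.mem_empty_iff_false, iff_false,
      not_forall, not_le]
    obtain ⟨n, hn⟩ := exists_nat_gt |X ω|
    exact ⟨n, hn⟩
  have h := tendsto_measure_iInter_atTop (μ := Q) (fun n => (hmeas n).nullMeasurableSet) hanti
    ⟨0, measure_ne_top _ _⟩
  rw [hempty] at h
  simp only [measure_empty] at h
  have h2 := (ENNReal.tendsto_toReal ENNReal.zero_ne_top).comp h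
  exact h2

lemma lift_err {Ωα : Type*} [MeasurableSpace Ωα] {R : Measure Ωα} [IsProbabilityMeasure R]
    {U V : Ωα → ℝ} (hU : Measurable U) (hV : Measurable V)
    {g h : ℝ → ℝ} (hgc : Continuous g) (hhc : Continuous h)
    (hg1 : ∀ x, |g x| ≤ 1) (hh1 : ∀ x, |h x| ≤ 1)
    {T aa : ℝ} [Fact (0 < T)] (Gc Hc : C(AddCircle T, ℂ))
    (hG : ∀ x ∈ Set.Ico aa (aa+T), Gc (x : AddCircle T) = (g x : ℂ))
    (hH : ∀ x ∈ Set.Ico aa (aa+T), Hc (x : AddCircle T) = (h x : ℂ))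
    (hGb : ∀ u, ‖Gc u‖ ≤ 1) (hHb : ∀ u, ‖Hc u‖ ≤ 1) :
    ‖(∫ ω, ((g (U ω) : ℂ)) * ((h (V ω)) : ℂ) ∂(R))
        - ∫ ω, Gc (U ω : AddCircle T) * Hc (V ω : AddCircle T) ∂(R)‖
      ≤ 2 * ((R {ω | U ω ∉ Set.Ico aa (aa+T)}).toReal
          + (R {ω | V ω ∉ Set.Ico aa (aa+T)}).toReal) := by
  have hmk : Measurable (fun x : ℝ => (x : AddCircle T)) := AddCircle.measurable_mk'
  set A : Set Ωα := {ω | U ω ∉ Set.Ico aa (aa+T)} with hA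
  set B : Set Ωα := {ω | V ω ∉ Set.Ico aa (aa+T)} with hB
  have hAmeas : MeasurableSet A := (hU measurableSet_Ico).compl
  have hBmeas : MeasurableSet B := (hV measurableSet_Ico).compl
  set S : Set Ωα := A ∪ B with hS
  have hSmeas : MeasurableSet S := hAmeas.union hBmeas
  set f₁ : Ωα → ℂ := fun ω => ((g (U ω) : ℂ)) * ((h (V ω)) : ℂ) with hf₁
  set f₂ : Ωα → ℂ := fun ω => Gc (U ω : AddCircle T) * Hc (V ω : AddCircle T) with hf₂
  have hmf₁ : AEStronglyMeasurable f₁ R :=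
    ((Complex.continuous_ofReal.comp hgc).measurable.comp hU).aestronglyMeasurable.mul
      ((Complex.continuous_ofReal.comp hhc).measurable.comp hV).aestronglyMeasurable
  have hmf₂ : AEStronglyMeasurable f₂ R :=
    ((map_continuous Gc).measurable.comp (hmk.comp hU)).aestronglyMeasurable.mul
      ((map_continuous Hc).measurable.comp (hmk.comp hV)).aestronglyMeasurable
  have hbd₁ : ∀ ω, ‖f₁ ω‖ ≤ 1 := by
    intro ω
    rw [hf₁]
    simp only [norm_mul, Complex.norm_real, Real.norm_eq_abs]
    exact mul_le_one₀ (hg1 _) (abs_nonneg _) (hh1 _)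
  have hbd₂ : ∀ ω, ‖f₂ ω‖ ≤ 1 := by
    intro ω
    rw [hf₂]
    simp only [norm_mul]
    exact mul_le_one₀ (hGb _) (norm_nonneg _) (hHb _)
  have hint₁ : Integrable f₁ R := integrable_bdd hmf₁ hbd₁
  have hint₂ : Integrable f₂ R := integrable_bdd hmf₂ hbd₂
  have hdiff : (fun ω => f₁ ω - f₂ ω) = S.indicator (fun ω => f₁ ω - f₂ ω) := by
    funext ω
    by_cases hω : ω ∈ S
    · rw [Set.indicator_of_mem hω]
    · rw [Set.indicator_of_notMem hω]
      have hωU : U ω ∈ Set.Ico aa (aa+T) := by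
        by_contra hc
        exact hω (Or.inl hc)
      have hωV : V ω ∈ Set.Ico aa (aa+T) := by
        by_contra hc
        exact hω (Or.inr hc)
      rw [hf₁, hf₂]
      simp only
      rw [hG _ hωU, hH _ hωV, sub_self]
  rw [← integral_sub hint₁ hint₂, hdiff, integral_indicator hSmeas]
  have hnorm : ‖∫ ω in S, (f₁ ω - f₂ ω) ∂(R)‖ ≤ 2 * (R S).toReal :=
    norm_setIntegral_le_of_norm_le_const (measure_lt_top R S)
      (fun ω _ => le_trans (norm_sub_le _ _) (by linarith [hbd₁ ω, hbd₂ ω]))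
  refine le_trans hnorm ?_
  have hST : (R S).toReal ≤ (R A).toReal + (R B).toReal := by
    rw [← ENNReal.toReal_add (measure_ne_top _ _) (measure_ne_top _ _)]
    exact ENNReal.toReal_mono
      (ENNReal.add_ne_top.mpr ⟨measure_ne_top _ _, measure_ne_top _ _⟩)
      (measure_union_le _ _)
  linarith

lemma step_cc {Q : Measure Ω} [IsProbabilityMeasure Q] {Q' : Measure Ω'}
    [IsProbabilityMeasure Q'] {X Y : Ω → ℝ} {X' Y' : Ω' → ℝ}
    (hX : Measurable X) (hY : Measurable Y) (hX' : Measurable X') (hY' : Measurable Y')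
    (hchar : ∀ s t : ℝ, ∫ ω, Complex.exp (((s * X ω + t * Y ω : ℝ) : ℂ) * Complex.I) ∂Q
      = ∫ ω, Complex.exp (((s * X' ω + t * Y' ω : ℝ) : ℂ) * Complex.I) ∂Q')
    {g h : ℝ → ℝ} (hgc : Continuous g) (hhc : Continuous h)
    (hgs : HasCompactSupport g) (hhs : HasCompactSupport h)
    (hg0 : ∀ x, 0 ≤ g x) (hg1 : ∀ x, g x ≤ 1) (hh0 : ∀ x, 0 ≤ h x) (hh1 : ∀ x, h x ≤ 1) :
    ∫ ω, g (X ω) * h (Y ω) ∂Q = ∫ ω, g (X' ω) * h (Y' ω) ∂Q' := by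
  obtain ⟨r₁, hr₁⟩ := hgs.isBounded.subset_closedBall 0
  obtain ⟨r₂, hr₂⟩ := hhs.isBounded.subset_closedBall 0
  set M₀ : ℝ := max (max r₁ r₂) 0 + 1 with hM₀
  have hM₀pos : 0 < M₀ := by positivity
  have hM₀1 : 1 ≤ M₀ := by
    have := le_max_right (max r₁ r₂) 0
    simp only [hM₀]
    linarith [le_max_right (max r₁ r₂) 0]
  have hgz : ∀ x : ℝ, M₀ ≤ |x| → g x = 0 := by
    intro x hx
    apply image_eq_zero_of_notMem_tsupport
    intro hmem
    have := hr₁ hmem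
    rw [Metric.mem_closedBall, Real.dist_eq, sub_zero] at this
    have h1 : r₁ ≤ max r₁ r₂ := le_max_left _ _
    have h2 : max r₁ r₂ ≤ max (max r₁ r₂) 0 := le_max_left _ _
    linarith
  have hhz : ∀ x : ℝ, M₀ ≤ |x| → h x = 0 := by
    intro x hx
    apply image_eq_zero_of_notMem_tsupport
    intro hmem
    have := hr₂ hmem
    rw [Metric.mem_closedBall, Real.dist_eq, sub_zero] at this
    have h1 : r₂ ≤ max r₁ r₂ := le_max_right _ _
    have h2 : max r₁ r₂ ≤ max (max r₁ r₂) 0 := le_max_left _ _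
    linarith
  set D : ℂ := (∫ ω, ((g (X ω) : ℂ)) * ((h (Y ω)) : ℂ) ∂Q)
      - ∫ ω, ((g (X' ω) : ℂ)) * ((h (Y' ω)) : ℂ) ∂Q' with hD
  have habs_g : ∀ x, |g x| ≤ 1 := fun x => abs_le.mpr ⟨by linarith [hg0 x], hg1 x⟩
  have habs_h : ∀ x, |h x| ≤ 1 := fun x => abs_le.mpr ⟨by linarith [hh0 x], hh1 x⟩
  have main : ∀ n : ℕ, ‖D‖
      ≤ (2 * ((Q {ω | (n:ℝ) ≤ |X ω|}).toReal + (Q {ω | (n:ℝ) ≤ |Y ω|}).toReal)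
        + 2 * ((Q' {ω | (n:ℝ) ≤ |X' ω|}).toReal + (Q' {ω | (n:ℝ) ≤ |Y' ω|}).toReal)) := by
    intro n
    set T : ℝ := 2 * (M₀ + n) with hTdef
    have hT : 0 < T := by positivity
    haveI : Fact (0 < T) := ⟨hT⟩
    set aa : ℝ := -(M₀ + n) with haa
    have haT : aa + T = M₀ + n := by rw [haa, hTdef]; ring
    -- lifted functions
    have hG_end : ((g aa : ℝ) : ℂ) = ((g (aa + T) : ℝ) : ℂ) := by
      rw [hgz aa (by rw [haa, abs_neg, abs_of_pos (by positivity)]; nlinarith),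
        hgz (aa+T) (by rw [haT, abs_of_pos (by positivity)]; nlinarith)]
    have hH_end : ((h aa : ℝ) : ℂ) = ((h (aa + T) : ℝ) : ℂ) := by
      rw [hhz aa (by rw [haa, abs_neg, abs_of_pos (by positivity)]; nlinarith),
        hhz (aa+T) (by rw [haT, abs_of_pos (by positivity)]; nlinarith)]
    set Gf : AddCircle T → ℂ := AddCircle.liftIco T aa (fun x => ((g x : ℝ) : ℂ)) with hGf
    set Hf : AddCircle T → ℂ := AddCircle.liftIco T aa (fun x => ((h x : ℝ) : ℂ)) with hHf
    have hGcont : Continuous Gf := AddCircle.liftIco_continuous hG_end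
      ((Complex.continuous_ofReal.comp hgc).continuousOn)
    have hHcont : Continuous Hf := AddCircle.liftIco_continuous hH_end
      ((Complex.continuous_ofReal.comp hhc).continuousOn)
    set Gc : C(AddCircle T, ℂ) := ⟨Gf, hGcont⟩ with hGc
    set Hc : C(AddCircle T, ℂ) := ⟨Hf, hHcont⟩ with hHc
    have hGval : ∀ u : AddCircle T, ∃ x : ℝ, Gc u = ((g x : ℝ) : ℂ) := by
      intro u
      exact ⟨(AddCircle.equivIco T aa u : ℝ), rfl⟩
    have hHval : ∀ u : AddCircle T, ∃ x : ℝ, Hc u = ((h x : ℝ) : ℂ) := by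
      intro u
      exact ⟨(AddCircle.equivIco T aa u : ℝ), rfl⟩
    have hGb : ∀ u, ‖Gc u‖ ≤ 1 := by
      intro u
      obtain ⟨x, hx⟩ := hGval u
      rw [hx, Complex.norm_real, Real.norm_eq_abs]
      exact habs_g x
    have hHb : ∀ u, ‖Hc u‖ ≤ 1 := by
      intro u
      obtain ⟨x, hx⟩ := hHval u
      rw [hx, Complex.norm_real, Real.norm_eq_abs]
      exact habs_h x
    have hGIco : ∀ x ∈ Set.Ico aa (aa+T), Gc (x : AddCircle T) = ((g x : ℝ) : ℂ) := by
      intro x hx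
      show Gf _ = _
      rw [hGf]
      exact AddCircle.liftIco_coe_apply (f := fun x : ℝ => ((g x : ℝ) : ℂ)) hx
    have hHIco : ∀ x ∈ Set.Ico aa (aa+T), Hc (x : AddCircle T) = ((h x : ℝ) : ℂ) := by
      intro x hx
      show Hf _ = _
      rw [hHf]
      exact AddCircle.liftIco_coe_apply (f := fun x : ℝ => ((h x : ℝ) : ℂ)) hx
    have hcirc := step_circle hX hY hX' hY' hchar T hT Gc Hc
    have herrQ := lift_err hX hY hgc hhc habs_g habs_h Gc Hc hGIco hHIco hGb hHb (R := Q)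
    have herrQ' := lift_err hX' hY' hgc hhc habs_g habs_h Gc Hc hGIco hHIco hGb hHb (R := Q')
    -- bad set inclusions
    have hsubX : ∀ (W : Ω → ℝ), {ω | W ω ∉ Set.Ico aa (aa+T)} ⊆ {ω | (n:ℝ) ≤ |W ω|} := by
      intro W ω hω
      simp only [Set.mem_setOf_eq, Set.mem_Ico, not_and_or, not_le, not_lt] at hω ⊢
      rcases hω with hω | hω
      · rw [haa] at hω
        rw [le_abs]
        right
        linarith
      · rw [haT] at hω
        rw [le_abs]
        left
        linarith
    have hsubX' : ∀ (W : Ω' → ℝ), {ω | W ω ∉ Set.Ico aa (aa+T)} ⊆ {ω | (n:ℝ) ≤ |W ω|} := by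
      intro W ω hω
      simp only [Set.mem_setOf_eq, Set.mem_Ico, not_and_or, not_le, not_lt] at hω ⊢
      rcases hω with hω | hω
      · rw [haa] at hω
        rw [le_abs]
        right
        linarith
      · rw [haT] at hω
        rw [le_abs]
        left
        linarith
    have hmonoQ : ∀ (W : Ω → ℝ), (Q {ω | W ω ∉ Set.Ico aa (aa+T)}).toReal
        ≤ (Q {ω | (n:ℝ) ≤ |W ω|}).toReal := fun W =>
      ENNReal.toReal_mono (measure_ne_top _ _) (measure_mono (hsubX W))
    have hmonoQ' : ∀ (W : Ω' → ℝ), (Q' {ω | W ω ∉ Set.Ico aa (aa+T)}).toReal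
        ≤ (Q' {ω | (n:ℝ) ≤ |W ω|}).toReal := fun W =>
      ENNReal.toReal_mono (measure_ne_top _ _) (measure_mono (hsubX' W))
    have hDsplit : D = ((∫ ω, ((g (X ω) : ℂ)) * ((h (Y ω)) : ℂ) ∂Q)
          - ∫ ω, Gc (X ω : AddCircle T) * Hc (Y ω : AddCircle T) ∂Q)
        - ((∫ ω, ((g (X' ω) : ℂ)) * ((h (Y' ω)) : ℂ) ∂Q')
          - ∫ ω, Gc (X' ω : AddCircle T) * Hc (Y' ω : AddCircle T) ∂Q') := by
      rw [hD, hcirc]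
      ring
    rw [hDsplit]
    refine le_trans (norm_sub_le _ _) ?_
    have e1 := le_trans herrQ (by linarith [hmonoQ X, hmonoQ Y] :
      2 * ((Q {ω | X ω ∉ Set.Ico aa (aa+T)}).toReal + (Q {ω | Y ω ∉ Set.Ico aa (aa+T)}).toReal)
        ≤ 2 * ((Q {ω | (n:ℝ) ≤ |X ω|}).toReal + (Q {ω | (n:ℝ) ≤ |Y ω|}).toReal))
    have e2 := le_trans herrQ' (by linarith [hmonoQ' X', hmonoQ' Y'] :
      2 * ((Q' {ω | X' ω ∉ Set.Ico aa (aa+T)}).toReal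
          + (Q' {ω | Y' ω ∉ Set.Ico aa (aa+T)}).toReal)
        ≤ 2 * ((Q' {ω | (n:ℝ) ≤ |X' ω|}).toReal + (Q' {ω | (n:ℝ) ≤ |Y' ω|}).toReal))
    linarith
  have hlim : Filter.Tendsto (fun n : ℕ =>
      (2 * ((Q {ω | (n:ℝ) ≤ |X ω|}).toReal + (Q {ω | (n:ℝ) ≤ |Y ω|}).toReal)
        + 2 * ((Q' {ω | (n:ℝ) ≤ |X' ω|}).toReal + (Q' {ω | (n:ℝ) ≤ |Y' ω|}).toReal)))
      Filter.atTop (𝓝 0) := by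
    have := ((((tail_to_zero (Q := Q) hX)).add (tail_to_zero (Q := Q) hY)).const_mul 2).add
      (((tail_to_zero (Q := Q') hX').add (tail_to_zero (Q := Q') hY')).const_mul 2)
    simpa using this
  have hD0 : ‖D‖ ≤ 0 := ge_of_tendsto hlim (Filter.Eventually.of_forall main)
  have hDeq : D = 0 := norm_eq_zero.mp (le_antisymm hD0 (norm_nonneg _))
  have h2 : ∫ ω, ((g (X ω) * h (Y ω) : ℝ) : ℂ) ∂Q
      = ∫ ω, ((g (X' ω) * h (Y' ω) : ℝ) : ℂ) ∂Q' := by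
    have h3 := sub_eq_zero.mp hDeq
    simpa [Complex.ofReal_mul] using h3
  have h4 : ((∫ ω, g (X ω) * h (Y ω) ∂Q : ℝ) : ℂ) = ((∫ ω, g (X' ω) * h (Y' ω) ∂Q' : ℝ) : ℂ) :=
    (integral_ofReal (𝕜 := ℂ)).symm.trans (h2.trans (integral_ofReal (𝕜 := ℂ)))
  exact Complex.ofReal_inj.mp h4

end StepCircle


section Quad

variable {Ω : Type*} [MeasurableSpace Ω] {Ω' : Type*} [MeasurableSpace Ω']

/-- Continuous ramp approximations to the indicator of `Ioi c`. -/
def ramp (c : ℝ) (n : ℕ) (x : ℝ) : ℝ := max 0 (min 1 (min ((n:ℝ)*(x-c)) ((n:ℝ)+1-x)))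

lemma ramp_cont (c : ℝ) (n : ℕ) : Continuous (ramp c n) := by
  unfold ramp
  fun_prop

lemma ramp_nonneg (c : ℝ) (n : ℕ) (x : ℝ) : 0 ≤ ramp c n x := le_max_left _ _

lemma ramp_le_one (c : ℝ) (n : ℕ) (x : ℝ) : ramp c n x ≤ 1 :=
  max_le zero_le_one (min_le_left _ _)

lemma ramp_zero_of_le {c x : ℝ} (n : ℕ) (hx : x ≤ c) : ramp c n x = 0 := by
  unfold ramp
  have h1 : (n:ℝ)*(x-c) ≤ 0 :=
    mul_nonpos_iff.mpr (Or.inl ⟨Nat.cast_nonneg n, by linarith⟩)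
  exact max_eq_left (le_trans (min_le_right _ _) (le_trans (min_le_left _ _) h1))

lemma ramp_supp (c : ℝ) (n : ℕ) : HasCompactSupport (ramp c n) := by
  apply HasCompactSupport.intro (isCompact_Icc (a := c) (b := (n:ℝ)+1))
  intro x hx
  rw [Set.mem_Icc, not_and_or, not_le, not_le] at hx
  rcases hx with hx | hx
  · exact ramp_zero_of_le n (le_of_lt hx)
  · unfold ramp
    have h1 : (n:ℝ)+1-x ≤ 0 := by linarith
    exact max_eq_left (le_trans (min_le_right _ _) (le_trans (min_le_right _ _) h1))

lemma ramp_tendsto (c x : ℝ) :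
    Filter.Tendsto (fun n : ℕ => ramp c n x) Filter.atTop (𝓝 (if c < x then 1 else 0)) := by
  by_cases hcx : c < x
  · simp only [if_pos hcx]
    obtain ⟨N₁, hN₁⟩ := exists_nat_ge x
    obtain ⟨N₂, hN₂⟩ := exists_nat_ge (1/(x-c))
    have hev : ∀ᶠ n : ℕ in Filter.atTop, ramp c n x = 1 := by
      filter_upwards [Filter.eventually_ge_atTop N₁, Filter.eventually_ge_atTop N₂] with n h1 h2
      have hc1 : (N₁:ℝ) ≤ (n:ℝ) := by exact_mod_cast h1
      have hc2 : (N₂:ℝ) ≤ (n:ℝ) := by exact_mod_cast h2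
      have hx1 : (1:ℝ) ≤ (n:ℝ)+1-x := by linarith
      have hpos : 0 < x - c := by linarith
      have hx2 : (1:ℝ) ≤ (n:ℝ)*(x-c) := by
        have h3 : (1:ℝ)/(x-c) ≤ (n:ℝ) := by linarith
        calc (1:ℝ) = (1/(x-c))*(x-c) := by field_simp
          _ ≤ (n:ℝ)*(x-c) := mul_le_mul_of_nonneg_right h3 (le_of_lt hpos)
      unfold ramp
      rw [min_eq_left (le_min hx2 hx1), max_eq_right zero_le_one]
    exact Filter.Tendsto.congr' (Filter.EventuallyEq.symm hev) tendsto_const_nhds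
  · simp only [if_neg hcx]
    push_neg at hcx
    have : ∀ n : ℕ, ramp c n x = 0 := fun n => ramp_zero_of_le n hcx
    simpa [this] using tendsto_const_nhds

lemma quad_lim {R : Measure Ω} [IsProbabilityMeasure R]
    {U V : Ω → ℝ} (hU : Measurable U) (hV : Measurable V) (a b : ℝ) :
    Filter.Tendsto (fun n : ℕ => ∫ ω, ramp a n (U ω) * ramp b n (V ω) ∂(R)) Filter.atTop
      (𝓝 ((R {ω | a < U ω ∧ b < V ω}).toReal)) := by
  have hSm : MeasurableSet {ω | a < U ω ∧ b < V ω} :=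
    (measurableSet_lt measurable_const hU).inter (measurableSet_lt measurable_const hV)
  rw [← measureReal_def, ← integral_indicator_one hSm]
  refine tendsto_integral_of_dominated_convergence (fun _ => (1:ℝ)) ?_ (integrable_const 1) ?_ ?_
  · intro n
    exact (((ramp_cont a n).measurable.comp hU).mul
      ((ramp_cont b n).measurable.comp hV)).aestronglyMeasurable
  · intro n
    filter_upwards with ω
    rw [Real.norm_eq_abs, abs_mul, _root_.abs_of_nonneg (ramp_nonneg _ _ _),
      _root_.abs_of_nonneg (ramp_nonneg _ _ _)]
    exact mul_le_one₀ (ramp_le_one _ _ _) (ramp_nonneg _ _ _) (ramp_le_one _ _ _)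
  · filter_upwards with ω
    have hmul := (ramp_tendsto a (U ω)).mul (ramp_tendsto b (V ω))
    have : (if a < U ω then (1:ℝ) else 0) * (if b < V ω then (1:ℝ) else 0)
        = Set.indicator {ω | a < U ω ∧ b < V ω} (1 : Ω → ℝ) ω := by
      by_cases h1 : a < U ω <;> by_cases h2 : b < V ω <;>
        simp [Set.indicator, h1, h2]
    rwa [this] at hmul

lemma quad_eq {Q : Measure Ω} [IsProbabilityMeasure Q] {Q' : Measure Ω'}
    [IsProbabilityMeasure Q'] {X Y : Ω → ℝ} {X' Y' : Ω' → ℝ}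
    (hX : Measurable X) (hY : Measurable Y) (hX' : Measurable X') (hY' : Measurable Y')
    (hchar : ∀ s t : ℝ, ∫ ω, Complex.exp (((s * X ω + t * Y ω : ℝ) : ℂ) * Complex.I) ∂Q
      = ∫ ω, Complex.exp (((s * X' ω + t * Y' ω : ℝ) : ℂ) * Complex.I) ∂Q')
    (a b : ℝ) :
    Q {ω | a < X ω ∧ b < Y ω} = Q' {ω | a < X' ω ∧ b < Y' ω} := by
  have heq : ∀ n : ℕ, ∫ ω, ramp a n (X ω) * ramp b n (Y ω) ∂Q
      = ∫ ω, ramp a n (X' ω) * ramp b n (Y' ω) ∂Q' := fun n =>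
    step_cc hX hY hX' hY' hchar (ramp_cont a n) (ramp_cont b n) (ramp_supp a n) (ramp_supp b n)
      (ramp_nonneg a n) (ramp_le_one a n) (ramp_nonneg b n) (ramp_le_one b n)
  have h2' : Filter.Tendsto (fun n : ℕ => ∫ ω, ramp a n (X ω) * ramp b n (Y ω) ∂Q)
      Filter.atTop (𝓝 ((Q' {ω | a < X' ω ∧ b < Y' ω}).toReal)) := by
    simp only [heq]
    exact quad_lim hX' hY' a b
  have h3 := tendsto_nhds_unique (quad_lim hX hY a b) h2'
  exact (ENNReal.toReal_eq_toReal_iff' (measure_ne_top _ _) (measure_ne_top _ _)).mp h3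

lemma quad_eq' {Q : Measure Ω} [IsProbabilityMeasure Q] {Q' : Measure Ω'}
    [IsProbabilityMeasure Q'] {X Y : Ω → ℝ} {X' Y' : Ω' → ℝ}
    (hX : AEMeasurable X Q) (hY : AEMeasurable Y Q)
    (hX' : AEMeasurable X' Q') (hY' : AEMeasurable Y' Q')
    (hchar : ∀ s t : ℝ, ∫ ω, Complex.exp (((s * X ω + t * Y ω : ℝ) : ℂ) * Complex.I) ∂Q
      = ∫ ω, Complex.exp (((s * X' ω + t * Y' ω : ℝ) : ℂ) * Complex.I) ∂Q')
    (a b : ℝ) :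
    Q {ω | a < X ω ∧ b < Y ω} = Q' {ω | a < X' ω ∧ b < Y' ω} := by
  have hchar₀ : ∀ s t : ℝ,
      ∫ ω, Complex.exp (((s * hX.mk X ω + t * hY.mk Y ω : ℝ) : ℂ) * Complex.I) ∂Q
        = ∫ ω, Complex.exp (((s * hX'.mk X' ω + t * hY'.mk Y' ω : ℝ) : ℂ) * Complex.I) ∂Q' := by
    intro s t
    have e1 : ∫ ω, Complex.exp (((s * hX.mk X ω + t * hY.mk Y ω : ℝ) : ℂ) * Complex.I) ∂Q
        = ∫ ω, Complex.exp (((s * X ω + t * Y ω : ℝ) : ℂ) * Complex.I) ∂Q := by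
      apply integral_congr_ae
      filter_upwards [hX.ae_eq_mk, hY.ae_eq_mk] with ω h1 h2
      rw [h1, h2]
    have e2 : ∫ ω, Complex.exp (((s * hX'.mk X' ω + t * hY'.mk Y' ω : ℝ) : ℂ) * Complex.I) ∂Q'
        = ∫ ω, Complex.exp (((s * X' ω + t * Y' ω : ℝ) : ℂ) * Complex.I) ∂Q' := by
      apply integral_congr_ae
      filter_upwards [hX'.ae_eq_mk, hY'.ae_eq_mk] with ω h1 h2
      rw [h1, h2]
    rw [e1, e2, hchar s t]
  have hs1 : Q {ω | a < X ω ∧ b < Y ω} = Q {ω | a < hX.mk X ω ∧ b < hY.mk Y ω} := by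
    apply measure_congr
    apply Filter.eventuallyEq_set.mpr
    filter_upwards [hX.ae_eq_mk, hY.ae_eq_mk] with ω h1 h2
    simp only [Set.mem_setOf_eq, h1, h2]
  have hs2 : Q' {ω | a < X' ω ∧ b < Y' ω}
      = Q' {ω | a < hX'.mk X' ω ∧ b < hY'.mk Y' ω} := by
    apply measure_congr
    apply Filter.eventuallyEq_set.mpr
    filter_upwards [hX'.ae_eq_mk, hY'.ae_eq_mk] with ω h1 h2
    simp only [Set.mem_setOf_eq, h1, h2]
  rw [hs1, hs2]
  exact quad_eq hX.measurable_mk hY.measurable_mk hX'.measurable_mk hY'.measurable_mk hchar₀ a b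

end Quad

section GaussApp

variable {Ω : Type*} [MeasurableSpace Ω]

lemma charBiv (P : Measure Ω) [IsProbabilityMeasure P] {Z₁ Z₂ : Ω → ℝ} {r : ℝ}
    (hr0 : 0 ≤ r) (hr1 : r < 1) (hZ : IsStdBivNormal P Z₁ Z₂ r) (s t : ℝ) :
    ∫ ω, Complex.exp (((s * Z₁ ω + t * Z₂ ω : ℝ) : ℂ) * Complex.I) ∂P
      = Complex.exp (((-(s^2 + 2*s*t*r + t^2)/2 : ℝ) : ℂ)) := by
  have hr2 : r^2 ≤ 1 := by nlinarith
  have hq : 0 ≤ s^2 + 2*s*t*r + t^2 := by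
    nlinarith [sq_nonneg (s + t*r), mul_nonneg (sq_nonneg t) (by linarith : (0:ℝ) ≤ 1 - r^2)]
  have hL := aemeasurable_of_map_gauss (hZ s t)
  have h := charGaussLin hL (hZ s t)
  rw [h]
  congr 1
  rw [Complex.ofReal_inj]
  rw [Real.coe_toNNReal _ hq]

lemma charProd (c d : ℝ) :
    ∫ p : ℝ × ℝ, Complex.exp (((c * p.1 + d * p.2 : ℝ) : ℂ) * Complex.I)
      ∂((gaussianReal 0 1).prod (gaussianReal 0 1))
    = Complex.exp (((-(c^2 + d^2)/2 : ℝ) : ℂ)) := by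
  have hsplit : ∀ p : ℝ × ℝ, Complex.exp (((c * p.1 + d * p.2 : ℝ) : ℂ) * Complex.I)
      = Complex.exp (((c * p.1 : ℝ) : ℂ) * Complex.I)
        * Complex.exp (((d * p.2 : ℝ) : ℂ) * Complex.I) := by
    intro p
    rw [← Complex.exp_add]
    congr 1
    push_cast
    ring
  simp_rw [hsplit]
  rw [integral_prod_mul (f := fun x : ℝ => Complex.exp (((c * x : ℝ) : ℂ) * Complex.I))
    (g := fun y : ℝ => Complex.exp (((d * y : ℝ) : ℂ) * Complex.I))]
  have h1 : ∀ (c : ℝ), ∫ x : ℝ, Complex.exp (((c * x : ℝ) : ℂ) * Complex.I) ∂(gaussianReal 0 1)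
      = Complex.exp (((-(c^2)/2 : ℝ) : ℂ)) := by
    intro c
    have hmap : (gaussianReal 0 1).map (c * ·) = gaussianReal 0 (NNReal.mk (c^2) (sq_nonneg _)) := by
      simpa using gaussianReal_map_const_mul (μ := 0) (v := 1) c
    have hmeas : AEMeasurable (fun x : ℝ => c * x) (gaussianReal 0 1) :=
      (measurable_const_mul c).aemeasurable
    have h := charGaussLin hmeas hmap
    rw [h]
    congr 1
  rw [h1, h1, ← Complex.exp_add]
  congr 1
  push_cast
  ring

lemma quad_eq_gauss (P : Measure Ω) [IsProbabilityMeasure P]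
    {Z₁ Z₂ : Ω → ℝ} {r : ℝ} (hr0 : 0 ≤ r) (hr1 : r < 1) (hZ : IsStdBivNormal P Z₁ Z₂ r)
    (a b : ℝ) :
    P {ω | a < Z₁ ω ∧ b < Z₂ ω}
      = ((gaussianReal 0 1).prod (gaussianReal 0 1))
          {p | a < p.1 ∧ b < r * p.1 + Real.sqrt (1 - r^2) * p.2} := by
  set σ := Real.sqrt (1 - r^2) with hσ
  have hσ2 : σ^2 = 1 - r^2 := Real.sq_sqrt (by nlinarith)
  have hZ₁ : AEMeasurable Z₁ P := by
    have h := aemeasurable_of_map_gauss (hZ 1 0)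
    simpa using h
  have hZ₂ : AEMeasurable Z₂ P := by
    have h := aemeasurable_of_map_gauss (hZ 0 1)
    simpa using h
  refine quad_eq' hZ₁ hZ₂ (measurable_fst.aemeasurable)
    (((measurable_fst.const_mul r).add (measurable_snd.const_mul σ)).aemeasurable) ?_ a b
  intro s t
  rw [charBiv P hr0 hr1 hZ s t]
  have hre : ∀ p : ℝ × ℝ, ((s * p.1 + t * (r * p.1 + σ * p.2) : ℝ) : ℂ)
      = (((s + t*r) * p.1 + (t*σ) * p.2 : ℝ) : ℂ) := by
    intro p
    push_cast
    ring
  simp_rw [Pi.add_apply, hre]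
  rw [charProd (s + t*r) (t*σ)]
  congr 1
  rw [Complex.ofReal_inj]
  have : s^2 + 2*s*t*r + t^2 = (s+t*r)^2 + (t*σ)^2 := by
    linear_combination (-(t^2)) * hσ2
  rw [this]

lemma key_ineq {r rs b₂ x w : ℝ} (hrs0 : 0 ≤ rs) (hrr : rs ≤ r) (hr1 : r < 1)
    (hb₂ : 0 ≤ b₂) (hx : b₂ ≤ x)
    (h : b₂ < rs * x + Real.sqrt (1 - rs^2) * w) :
    b₂ < r * x + Real.sqrt (1 - r^2) * w := by
  set s := Real.sqrt (1 - r^2) with hsdef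
  set ss := Real.sqrt (1 - rs^2) with hssdef
  have hr0 : 0 ≤ r := le_trans hrs0 hrr
  have hrs1 : rs < 1 := lt_of_le_of_lt hrr hr1
  have hs : 0 < s := Real.sqrt_pos.mpr (by nlinarith)
  have hss : 0 < ss := Real.sqrt_pos.mpr (by nlinarith)
  have hs2 : s^2 = 1 - r^2 := Real.sq_sqrt (by nlinarith)
  have hss2 : ss^2 = 1 - rs^2 := Real.sq_sqrt (by nlinarith)
  have hsless : s ≤ ss := Real.sqrt_le_sqrt (by nlinarith)
  have claim1 : ss*(1-r) ≤ s*(1-rs) := by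
    have e1 : ss*(1-r) = Real.sqrt ((1-rs^2)*(1-r)^2) := by
      rw [Real.sqrt_mul (by nlinarith), Real.sqrt_sq (by linarith)]
    have e2 : s*(1-rs) = Real.sqrt ((1-r^2)*(1-rs)^2) := by
      rw [Real.sqrt_mul (by nlinarith), Real.sqrt_sq (by linarith)]
    rw [e1, e2]
    apply Real.sqrt_le_sqrt
    nlinarith [mul_nonneg (mul_nonneg (sub_nonneg.mpr hrr) (by linarith : (0:ℝ) ≤ 1 - r))
      (by linarith : (0:ℝ) ≤ 1 - rs)]
  have key : (b₂ - r*x)*ss ≤ (b₂ - rs*x)*s := by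
    have h2 : ss - s ≤ r*ss - rs*s := by nlinarith
    have h3 : 0 ≤ ss - s := by linarith
    have hx0 : 0 ≤ x := le_trans hb₂ hx
    nlinarith [mul_le_mul_of_nonneg_right hx h3]
  have hfin : b₂ - rs*x < ss*w := by linarith
  nlinarith [mul_lt_mul_of_pos_right hfin hs]

end GaussApp

end CramerWoldAux


/-- Monotonicity of the bivariate normal joint upper tail in the correlation:
if `ρ* ≤ ρ` and `0 ≤ b₂ ≤ b₁` then
`P(Z₁* > b₁, Z₂* > b₂) ≤ P(Z₁ > b₁, Z₂ > b₂)`. -/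
theorem bivNormal_upper_tail_mono
    {Ω Ω' : Type*} [MeasurableSpace Ω] [MeasurableSpace Ω']
    (P : Measure Ω) (P' : Measure Ω')
    [IsProbabilityMeasure P] [IsProbabilityMeasure P']
    (Z₁ Z₂ : Ω → ℝ) (Zs₁ Zs₂ : Ω' → ℝ) (ρ ρstar : ℝ)
    (hZ : IsStdBivNormal P Z₁ Z₂ ρ) (hZs : IsStdBivNormal P' Zs₁ Zs₂ ρstar)
    (hρ0 : 0 ≤ ρ) (hρ1 : ρ < 1) (hρs0 : 0 ≤ ρstar) (hρs1 : ρstar < 1)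
    (hρρ : ρstar ≤ ρ) (b₁ b₂ : ℝ) (hb₂ : 0 ≤ b₂) (hb : b₂ ≤ b₁) :
    P' {ω | b₁ < Zs₁ ω ∧ b₂ < Zs₂ ω} ≤ P {ω | b₁ < Z₁ ω ∧ b₂ < Z₂ ω} := by
  rw [quad_eq_gauss P' hρs0 hρs1 hZs b₁ b₂, quad_eq_gauss P hρ0 hρ1 hZ b₁ b₂]
  apply measure_mono
  rintro ⟨x, w⟩ ⟨h1, h2⟩
  refine ⟨h1, ?_⟩
  exact key_ineq hρs0 hρρ hρ1 hb₂ (le_trans hb (le_of_lt h1)) h2
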